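/- Let (Ω, ℱ, P) be a probability space, d, m positive natural numbers, β : Fin m → ℝᵈ fixed vectors with V = Σᵢ β(i) β(i)ᵀ invertible, θ⋆ ∈ ℝᵈ, χ ∈ ℝ, and η : Fin m → Ω → ℝ an independent family of random variables with E[exp(λ·η(i))] ≤ exp(λ²/8) for all λ ∈ ℝ and all i. Define ζ(i) = χ·⟨θ⋆, β(i)⟩ + η(i) and the least-squares estimator θ̂ = V⁻¹ (Σᵢ ζ(i)·β(i)). Then for every nonzero a ∈ ℝᵈ and every δ ∈ (0, 1), P( |⟨θ̂, a⟩ − χ·⟨θ⋆, a⟩| ≥ √( (1/2)·(aᵀ V⁻¹ a)·log(1/δ) ) ) ≤ 2δ. -/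

import Mathlib

open Matrix MeasureTheory ProbabilityTheory

lemma tail_bound_aux {Ω : Type*} [MeasurableSpace Ω] (P : Measure Ω) [IsProbabilityMeasure P]
    {m : ℕ} (η : Fin m → Ω → ℝ) (hmeas : ∀ i, Measurable (η i))
    (hindep : iIndepFun η P)
    (hint : ∀ i (l : ℝ), Integrable (fun ω => Real.exp (l * η i ω)) P)
    (hsub : ∀ i (l : ℝ), ∫ ω, Real.exp (l * η i ω) ∂P ≤ Real.exp (l ^ 2 / 8))
    (c : Fin m → ℝ) {s : ℝ} (hs : s = ∑ i, (c i) ^ 2) (hspos : 0 < s)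
    {t : ℝ} (ht : 0 ≤ t) :
    (P {ω | t ≤ ∑ i, c i * η i ω}).toReal ≤ Real.exp (-2 * t ^ 2 / s) := by
  set X : Fin m → Ω → ℝ := fun i ω => c i * η i ω with hX
  have hXmeas : ∀ i, Measurable (X i) := fun i => (hmeas i).const_mul _
  have hXindep : iIndepFun X P :=
    hindep.comp (fun i x => c i * x) (fun i => measurable_const_mul _)
  have hXint : ∀ (l : ℝ) (i : Fin m), Integrable (fun ω => Real.exp (l * X i ω)) P := by
    intro l i
    simpa [hX, mul_assoc] using hint i (l * c i)
  set l : ℝ := 4 * t / s with hl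
  have hl0 : 0 ≤ l := by positivity
  have hSint : Integrable (fun ω => Real.exp (l * (∑ i, X i) ω)) P :=
    hXindep.integrable_exp_mul_sum hXmeas (fun i _ => hXint l i)
  have hmgf : mgf (∑ i, X i) P l ≤ Real.exp (l ^ 2 * s / 8) := by
    rw [hXindep.mgf_sum hXmeas]
    calc ∏ i, mgf (X i) P l ≤ ∏ i, Real.exp ((l * c i) ^ 2 / 8) := by
          refine Finset.prod_le_prod (fun i _ => mgf_nonneg) (fun i _ => ?_)
          unfold mgf
          simpa [hX, mul_assoc] using hsub i (l * c i)
      _ = Real.exp (∑ i, (l * c i) ^ 2 / 8) := by rw [Real.exp_sum]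
      _ = Real.exp (l ^ 2 * s / 8) := by
          congr 1
          simp only [mul_pow]
          rw [← Finset.sum_div, ← Finset.mul_sum, hs]
  have hset : {ω | t ≤ ∑ i, c i * η i ω} = {ω | t ≤ (∑ i, X i) ω} := by
    ext ω; simp [hX, Finset.sum_apply]
  rw [hset]
  calc (P {ω | t ≤ (∑ i, X i) ω}).toReal
      ≤ Real.exp (-l * t) * mgf (∑ i, X i) P l :=
        measure_ge_le_exp_mul_mgf t hl0 hSint
    _ ≤ Real.exp (-l * t) * Real.exp (l ^ 2 * s / 8) := by
        exact mul_le_mul_of_nonneg_left hmgf (Real.exp_pos _).le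
    _ = Real.exp (-l * t + l ^ 2 * s / 8) := (Real.exp_add _ _).symm
    _ ≤ Real.exp (-2 * t ^ 2 / s) := by
        apply Real.exp_le_exp.mpr
        apply le_of_eq
        rw [hl]
        field_simp
        ring

theorem least_squares_concentration
    {Ω : Type*} [MeasurableSpace Ω] (P : Measure Ω) [IsProbabilityMeasure P]
    (d m : ℕ) (hd : 0 < d) (hm : 0 < m)
    (β : Fin m → (Fin d → ℝ))
    (V : Matrix (Fin d) (Fin d) ℝ) (hV : V = ∑ i, vecMulVec (β i) (β i))
    (hVinv : IsUnit V)
    (θst : Fin d → ℝ) (χ : ℝ)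
    (η : Fin m → Ω → ℝ)
    (hmeas : ∀ i, Measurable (η i))
    (hindep : iIndepFun η P)
    (hint : ∀ i (l : ℝ), Integrable (fun ω => Real.exp (l * η i ω)) P)
    (hsub : ∀ i (l : ℝ), ∫ ω, Real.exp (l * η i ω) ∂P ≤ Real.exp (l ^ 2 / 8))
    (ζ : Fin m → Ω → ℝ) (hζ : ∀ i ω, ζ i ω = χ * (θst ⬝ᵥ β i) + η i ω)
    (θhat : Ω → (Fin d → ℝ)) (hθhat : ∀ ω, θhat ω = V⁻¹ *ᵥ (∑ i, ζ i ω • β i)) :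
    ∀ a : Fin d → ℝ, a ≠ 0 → ∀ δ : ℝ, 0 < δ → δ < 1 →
      P {ω | Real.sqrt ((1 / 2) * (a ⬝ᵥ (V⁻¹ *ᵥ a)) * Real.log (1 / δ)) ≤
          |θhat ω ⬝ᵥ a - χ * (θst ⬝ᵥ a)|} ≤ ENNReal.ofReal (2 * δ) := by
  intro a ha δ hδ0 hδ1
  have hdet : IsUnit V.det := (Matrix.isUnit_iff_isUnit_det V).mp hVinv
  set w : Fin d → ℝ := V⁻¹ *ᵥ a with hw
  set c : Fin m → ℝ := fun i => β i ⬝ᵥ w with hc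
  have hVsymm : Vᵀ = V := by
    rw [hV]
    ext i j
    simp [Matrix.transpose_apply, vecMulVec_apply, Matrix.sum_apply, mul_comm]
  have hWsymm : (V⁻¹)ᵀ = V⁻¹ := by rw [Matrix.transpose_nonsing_inv, hVsymm]
  have hVw : V *ᵥ w = a := by
    rw [hw, Matrix.mulVec_mulVec, Matrix.mul_nonsing_inv _ hdet, Matrix.one_mulVec]
  have hVx : ∀ x : Fin d → ℝ, V *ᵥ x = ∑ i, (β i ⬝ᵥ x) • β i := by
    intro x
    funext j
    simp only [hV, Matrix.mulVec, dotProduct, Matrix.sum_apply, vecMulVec_apply,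
      Finset.sum_apply, Pi.smul_apply, smul_eq_mul, Finset.sum_mul]
    rw [Finset.sum_comm]
    exact Finset.sum_congr rfl fun i _ => Finset.sum_congr rfl fun k _ => by ring
  have hlin : ∀ (v : Fin m → ℝ) (u : Fin d → ℝ),
      (∑ i, v i • β i) ⬝ᵥ u = ∑ i, v i * (β i ⬝ᵥ u) := by
    intro v u
    simp only [dotProduct, Finset.sum_apply, Pi.smul_apply, smul_eq_mul, Finset.sum_mul]
    rw [Finset.sum_comm]
    refine Finset.sum_congr rfl fun i _ => ?_
    rw [Finset.mul_sum]
    exact Finset.sum_congr rfl fun j _ => by ring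
  have hvm : a ᵥ* V⁻¹ = w := by rw [← hWsymm, Matrix.vecMul_transpose]
  have hdotsym : ∀ u : Fin d → ℝ, (V⁻¹ *ᵥ u) ⬝ᵥ a = w ⬝ᵥ u := by
    intro u
    rw [dotProduct_comm, Matrix.dotProduct_mulVec, hvm]
  have hsplit : ∀ ω, (∑ i, ζ i ω • β i) = χ • (V *ᵥ θst) + ∑ i, η i ω • β i := by
    intro ω
    rw [hVx θst, Finset.smul_sum, ← Finset.sum_add_distrib]
    refine Finset.sum_congr rfl fun i _ => ?_
    rw [hζ, add_smul, smul_smul, dotProduct_comm]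
  have hkey : ∀ ω, θhat ω ⬝ᵥ a - χ * (θst ⬝ᵥ a) = ∑ i, c i * η i ω := by
    intro ω
    rw [hθhat, hsplit, Matrix.mulVec_add, add_dotProduct, Matrix.mulVec_smul,
      Matrix.mulVec_mulVec, Matrix.nonsing_inv_mul _ hdet, Matrix.one_mulVec,
      smul_dotProduct, smul_eq_mul, hdotsym, add_sub_cancel_left, dotProduct_comm, hlin]
    exact Finset.sum_congr rfl fun i _ => mul_comm _ _
  have ha' : a = ∑ i, c i • β i := by rw [← hVw, hVx w]
  have hsum : a ⬝ᵥ w = ∑ i, (c i) ^ 2 := by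
    rw [ha', hlin]
    exact Finset.sum_congr rfl fun i _ => by rw [sq]
  set s : ℝ := a ⬝ᵥ w with hsdef
  have hsnonneg : 0 ≤ s := hsum ▸ Finset.sum_nonneg fun i _ => sq_nonneg _
  have hspos : 0 < s := by
    rcases hsnonneg.lt_or_eq with h | h
    · exact h
    · exfalso
      apply ha
      have h0 : ∑ i, (c i) ^ 2 = 0 := by rw [← hsum, ← h]
      have hz := (Finset.sum_eq_zero_iff_of_nonneg (fun i _ => sq_nonneg (c i))).mp h0
      rw [ha']
      refine Finset.sum_eq_zero fun i _ => ?_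
      have hci : c i = 0 := by
        have := hz i (Finset.mem_univ i)
        exact pow_eq_zero_iff two_ne_zero |>.mp this
      rw [hci, zero_smul]
  have hlog : 0 < Real.log (1 / δ) := Real.log_pos (one_lt_one_div hδ0 hδ1)
  set t : ℝ := Real.sqrt ((1 / 2) * s * Real.log (1 / δ)) with htdef
  have htarg : 0 ≤ (1 / 2) * s * Real.log (1 / δ) := by positivity
  have ht0 : 0 ≤ t := Real.sqrt_nonneg _
  have ht2 : t ^ 2 = (1 / 2) * s * Real.log (1 / δ) := Real.sq_sqrt htarg
  have hexp : Real.exp (-2 * t ^ 2 / s) = δ := by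
    rw [ht2]
    have : -2 * ((1 / 2) * s * Real.log (1 / δ)) / s = -Real.log (1 / δ) := by
      rw [div_eq_iff hspos.ne']
      ring
    rw [this, Real.exp_neg, Real.exp_log (by positivity), one_div, inv_inv]
  have hsum' : s = ∑ i, (c i) ^ 2 := hsum
  have hsumneg : s = ∑ i, (-c i) ^ 2 := by simpa [neg_pow] using hsum
  have hA := tail_bound_aux P η hmeas hindep hint hsub c hsum' hspos ht0
  have hB := tail_bound_aux P η hmeas hindep hint hsub (fun i => -c i) hsumneg hspos ht0
  rw [hexp] at hA hB
  have hsub1 : {ω | t ≤ |θhat ω ⬝ᵥ a - χ * (θst ⬝ᵥ a)|} ⊆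
      {ω | t ≤ ∑ i, c i * η i ω} ∪ {ω | t ≤ ∑ i, (fun i => -c i) i * η i ω} := by
    intro ω hω
    simp only [Set.mem_setOf_eq] at hω
    rw [hkey ω] at hω
    rcases le_abs.mp hω with h | h
    · exact Or.inl h
    · exact Or.inr (by simpa [Finset.sum_neg_distrib] using h)
  calc P {ω | t ≤ |θhat ω ⬝ᵥ a - χ * (θst ⬝ᵥ a)|}
      ≤ P ({ω | t ≤ ∑ i, c i * η i ω} ∪ {ω | t ≤ ∑ i, (fun i => -c i) i * η i ω}) :=
        measure_mono hsub1
    _ ≤ P {ω | t ≤ ∑ i, c i * η i ω} + P {ω | t ≤ ∑ i, (fun i => -c i) i * η i ω} :=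
        measure_union_le _ _
    _ ≤ ENNReal.ofReal δ + ENNReal.ofReal δ := by
        gcongr
        · exact (ENNReal.le_ofReal_iff_toReal_le (measure_ne_top _ _) hδ0.le).mpr hA
        · exact (ENNReal.le_ofReal_iff_toReal_le (measure_ne_top _ _) hδ0.le).mpr hB
    _ = ENNReal.ofReal (2 * δ) := by
        rw [← ENNReal.ofReal_add hδ0.le hδ0.le, two_mul]
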